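/- Let α, β > 1 be real numbers. Then for all nonnegative real numbers t₁, t₂, s₁, s₂: (t₁+t₂)^α·(s₁+s₂)^β − t₁^α·s₁^β − α·t₁^(α−1)·s₁^β·t₂ − β·t₁^α·s₁^(β−1)·s₂ − t₂^α·s₂^β ≥ 0. -/
import Mathlib

open Real

private lemma self_mul_rpow {x p : ℝ} (hx : 0 ≤ x) (hp : 0 < p) :
    x * x ^ p = x ^ (p + 1) := by
  rcases eq_or_lt_of_le hx with h | h
  · rw [← h, Real.zero_rpow hp.ne', Real.zero_rpow (by positivity), mul_zero]
  · rw [Real.rpow_add_one h.ne', mul_comm]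

private lemma weighted_bound {p q u v : ℝ} (hp : 0 < p) (hq : 0 < q) (hpq : 1 ≤ p + q)
    (hu0 : 0 ≤ u) (hu1 : u ≤ 1) (hv0 : 0 ≤ v) (hv1 : v ≤ 1) :
    u ^ p * v ^ q ≤ (p * u + q * v) / (p + q) := by
  have hs : 0 < p + q := by linarith
  set w := u ^ (p / (p + q)) * v ^ (q / (p + q)) with hw
  have hw0 : 0 ≤ w := by positivity
  have hw1 : w ≤ 1 :=
    mul_le_one₀ (Real.rpow_le_one hu0 hu1 (by positivity)) (by positivity)
      (Real.rpow_le_one hv0 hv1 (by positivity))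
  have h1 : u ^ p * v ^ q = w ^ (p + q) := by
    rw [hw, Real.mul_rpow (by positivity) (by positivity), ← Real.rpow_mul hu0,
      ← Real.rpow_mul hv0, div_mul_cancel₀ _ hs.ne', div_mul_cancel₀ _ hs.ne']
  have h2 : w ^ (p + q) ≤ w := by
    rcases eq_or_lt_of_le hw0 with h | h
    · rw [← h, Real.zero_rpow hs.ne']
    · calc w ^ (p + q) ≤ w ^ (1 : ℝ) := Real.rpow_le_rpow_of_exponent_ge h hw1 hpq
        _ = w := Real.rpow_one w
  have h3 : w ≤ (p / (p + q)) * u + (q / (p + q)) * v :=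
    Real.geom_mean_le_arith_mean2_weighted (by positivity) (by positivity) hu0 hv0
      (by field_simp)
  rw [h1]
  calc w ^ (p + q) ≤ w := h2
    _ ≤ (p / (p + q)) * u + (q / (p + q)) * v := h3
    _ = (p * u + q * v) / (p + q) := by ring

private lemma superadd {p q : ℝ} (hp : 0 < p) (hq : 0 < q) (hpq : 1 ≤ p + q)
    {a b c d : ℝ} (ha : 0 ≤ a) (hb : 0 ≤ b) (hc : 0 ≤ c) (hd : 0 ≤ d) :
    a ^ p * c ^ q + b ^ p * d ^ q ≤ (a + b) ^ p * (c + d) ^ q := by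
  rcases eq_or_lt_of_le (by positivity : (0:ℝ) ≤ a + b) with hS | hS
  · have ha0 : a = 0 := by linarith
    have hb0 : b = 0 := by linarith
    simp [ha0, hb0, Real.zero_rpow hp.ne']
  rcases eq_or_lt_of_le (by positivity : (0:ℝ) ≤ c + d) with hT | hT
  · have hc0 : c = 0 := by linarith
    have hd0 : d = 0 := by linarith
    simp [hc0, hd0, Real.zero_rpow hq.ne']
  have hu0 : 0 ≤ a / (a + b) := by positivity
  have hu1 : a / (a + b) ≤ 1 := by rw [div_le_one hS]; linarith
  have hu0' : 0 ≤ b / (a + b) := by positivity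
  have hu1' : b / (a + b) ≤ 1 := by rw [div_le_one hS]; linarith
  have hv0 : 0 ≤ c / (c + d) := by positivity
  have hv1 : c / (c + d) ≤ 1 := by rw [div_le_one hT]; linarith
  have hv0' : 0 ≤ d / (c + d) := by positivity
  have hv1' : d / (c + d) ≤ 1 := by rw [div_le_one hT]; linarith
  have h1 := weighted_bound hp hq hpq hu0 hu1 hv0 hv1
  have h2 := weighted_bound hp hq hpq hu0' hu1' hv0' hv1'
  have hsum : (a / (a + b)) ^ p * (c / (c + d)) ^ q
      + (b / (a + b)) ^ p * (d / (c + d)) ^ q ≤ 1 := by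
    have heq : (p * (a / (a + b)) + q * (c / (c + d))) / (p + q)
        + (p * (b / (a + b)) + q * (d / (c + d))) / (p + q) = 1 := by
      field_simp
      ring
    linarith
  have e1 : (a / (a + b)) ^ p * (a + b) ^ p = a ^ p := by
    rw [← Real.mul_rpow hu0 hS.le, div_mul_cancel₀ _ hS.ne']
  have e2 : (b / (a + b)) ^ p * (a + b) ^ p = b ^ p := by
    rw [← Real.mul_rpow hu0' hS.le, div_mul_cancel₀ _ hS.ne']
  have e3 : (c / (c + d)) ^ q * (c + d) ^ q = c ^ q := by
    rw [← Real.mul_rpow hv0 hT.le, div_mul_cancel₀ _ hT.ne']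
  have e4 : (d / (c + d)) ^ q * (c + d) ^ q = d ^ q := by
    rw [← Real.mul_rpow hv0' hT.le, div_mul_cancel₀ _ hT.ne']
  have key : a ^ p * c ^ q + b ^ p * d ^ q
      = ((a / (a + b)) ^ p * (c / (c + d)) ^ q
        + (b / (a + b)) ^ p * (d / (c + d)) ^ q) * ((a + b) ^ p * (c + d) ^ q) := by
    rw [← e1, ← e2, ← e3, ← e4]; ring
  rw [key]
  calc ((a / (a + b)) ^ p * (c / (c + d)) ^ q
        + (b / (a + b)) ^ p * (d / (c + d)) ^ q) * ((a + b) ^ p * (c + d) ^ q)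
      ≤ 1 * ((a + b) ^ p * (c + d) ^ q) :=
        mul_le_mul_of_nonneg_right hsum (by positivity)
    _ = (a + b) ^ p * (c + d) ^ q := one_mul _

/-- For `α, β > 1` and nonnegative `t₁, t₂, s₁, s₂`,
`(t₁+t₂)^α (s₁+s₂)^β - t₁^α s₁^β - α t₁^(α-1) s₁^β t₂ - β t₁^α s₁^(β-1) s₂ - t₂^α s₂^β ≥ 0`. -/
theorem interaction_nonneg
    (α β : ℝ) (hα : 1 < α) (hβ : 1 < β) :
    ∀ t₁ t₂ s₁ s₂ : ℝ, 0 ≤ t₁ → 0 ≤ t₂ → 0 ≤ s₁ → 0 ≤ s₂ →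
      (t₁ + t₂) ^ α * (s₁ + s₂) ^ β - t₁ ^ α * s₁ ^ β
          - α * t₁ ^ (α - 1) * s₁ ^ β * t₂ - β * t₁ ^ α * s₁ ^ (β - 1) * s₂
          - t₂ ^ α * s₂ ^ β ≥ 0 := by
  intro t₁ t₂ s₁ s₂ ht₁ ht₂ hs₁ hs₂
  have hα0 : (0:ℝ) < α := by linarith
  have hβ0 : (0:ℝ) < β := by linarith
  have hα1 : (0:ℝ) < α - 1 := by linarith
  have hβ1 : (0:ℝ) < β - 1 := by linarith
  set C : ℝ := α * t₁ ^ (α - 1) * s₁ ^ β * t₂ + β * t₁ ^ α * s₁ ^ (β - 1) * s₂ with hC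
  set D : ℝ := t₂ ^ α * s₂ ^ β with hD
  set g : ℝ → ℝ := fun r => (t₁ + r * t₂) ^ α * (s₁ + r * s₂) ^ β - C * r - D * r ^ (α + β)
    with hg
  have hderiv : ∀ r : ℝ, HasDerivAt g
      ((t₂ * α * (t₁ + r * t₂) ^ (α - 1)) * (s₁ + r * s₂) ^ β
        + (t₁ + r * t₂) ^ α * (s₂ * β * (s₁ + r * s₂) ^ (β - 1))
        - C - D * ((α + β) * r ^ (α + β - 1))) r := by
    intro r
    have h1 : HasDerivAt (fun r : ℝ => t₁ + r * t₂) t₂ r := by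
      simpa using ((hasDerivAt_id r).mul_const t₂).const_add t₁
    have h2 : HasDerivAt (fun r : ℝ => s₁ + r * s₂) s₂ r := by
      simpa using ((hasDerivAt_id r).mul_const s₂).const_add s₁
    have h1' := h1.rpow_const (p := α) (Or.inr hα.le)
    have h2' := h2.rpow_const (p := β) (Or.inr hβ.le)
    have h3 := h1'.mul h2'
    have h4 : HasDerivAt (fun r : ℝ => C * r) C r := by
      simpa using (hasDerivAt_id r).const_mul C
    have h5 : HasDerivAt (fun r : ℝ => D * r ^ (α + β)) (D * ((α + β) * r ^ (α + β - 1))) r :=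
      (Real.hasDerivAt_rpow_const (Or.inr (by linarith))).const_mul D
    exact (h3.sub h4).sub h5
  have hdiff : Differentiable ℝ g := fun x => (hderiv x).differentiableAt
  have hdnn : ∀ x ∈ interior (Set.Icc (0:ℝ) 1), 0 ≤ deriv g x := by
    rw [interior_Icc]
    rintro x ⟨hx0, hx1⟩
    rw [(hderiv x).deriv]
    have hxt : 0 ≤ x * t₂ := mul_nonneg hx0.le ht₂
    have hxs : 0 ≤ x * s₂ := mul_nonneg hx0.le hs₂
    have hL1 := superadd hα1 hβ0 (by linarith) ht₁ hxt hs₁ hxs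
    have hL2 := superadd hα0 hβ1 (by linarith) ht₁ hxt hs₁ hxs
    have hxx : x ^ (α - 1) * x ^ β = x ^ (α + β - 1) := by
      rw [← Real.rpow_add hx0]; ring_nf
    have hxx2 : x ^ α * x ^ (β - 1) = x ^ (α + β - 1) := by
      rw [← Real.rpow_add hx0]; ring_nf
    have hP1 : t₂ * t₂ ^ (α - 1) = t₂ ^ α := by
      have := self_mul_rpow ht₂ hα1
      rwa [sub_add_cancel] at this
    have hP2 : s₂ * s₂ ^ (β - 1) = s₂ ^ β := by
      have := self_mul_rpow hs₂ hβ1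
      rwa [sub_add_cancel] at this
    have hE1 : (x * t₂) ^ (α - 1) * (x * s₂) ^ β = x ^ (α + β - 1) * (t₂ ^ (α - 1) * s₂ ^ β) := by
      rw [Real.mul_rpow hx0.le ht₂, Real.mul_rpow hx0.le hs₂]
      linear_combination t₂ ^ (α - 1) * s₂ ^ β * hxx
    have hE2 : (x * t₂) ^ α * (x * s₂) ^ (β - 1)
        = x ^ (α + β - 1) * (t₂ ^ α * s₂ ^ (β - 1)) := by
      rw [Real.mul_rpow hx0.le ht₂, Real.mul_rpow hx0.le hs₂]
      linear_combination t₂ ^ α * s₂ ^ (β - 1) * hxx2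
    rw [hE1] at hL1
    rw [hE2] at hL2
    have hM1 := mul_le_mul_of_nonneg_left hL1 (by positivity : (0:ℝ) ≤ α * t₂)
    have hM2 := mul_le_mul_of_nonneg_left hL2 (by positivity : (0:ℝ) ≤ β * s₂)
    rw [hC, hD]
    nlinarith [hM1, hM2, hP1, hP2,
      mul_le_mul_of_nonneg_left (le_of_eq hP1.symm)
        (by positivity : (0:ℝ) ≤ α * (x ^ (α + β - 1) * s₂ ^ β)),
      mul_le_mul_of_nonneg_left (le_of_eq hP2.symm)
        (by positivity : (0:ℝ) ≤ β * (x ^ (α + β - 1) * t₂ ^ α))]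
  have hmono : MonotoneOn g (Set.Icc 0 1) :=
    monotoneOn_of_deriv_nonneg (convex_Icc 0 1) hdiff.continuous.continuousOn
      (hdiff.differentiableOn) hdnn
  have h01 := hmono (Set.mem_Icc.mpr ⟨le_refl 0, zero_le_one⟩)
    (Set.mem_Icc.mpr ⟨zero_le_one, le_refl 1⟩) zero_le_one
  have hg0 : g 0 = t₁ ^ α * s₁ ^ β := by
    simp [hg, Real.zero_rpow (by positivity : α + β ≠ 0)]
  have hg1 : g 1 = (t₁ + t₂) ^ α * (s₁ + s₂) ^ β - C - D := by
    simp [hg]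
  rw [hg0, hg1] at h01
  rw [hC, hD] at h01
  linarith
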